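/- Let m, ℓ, a be positive integers. Then ((ℓ, m)) divides a if and only if a can be written as a nonnegative integer combination of the elements of G_m(ℓ, a), i.e. there exists a function x : G_m(ℓ,a) → ℕ with ∑_{g ∈ G_m(ℓ,a)} g·x(g) = a. -/

import Mathlib

open Finset

/-- `((ℓ, m)) = ∏_{p prime, p ∣ ℓ} p ^ ν_p(m)`. -/
def dblParen (ℓ m : ℕ) : ℕ := ∏ p ∈ ℓ.primeFactors, p ^ (m.factorization p)

/-- `G_m(ℓ, a) = { g ∈ ℕ, g ≥ 1 : g ≤ a and gcd(g·ℓ, m) = g }`. -/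
def Gset (m ℓ a : ℕ) : Finset ℕ :=
  (Finset.Icc 1 a).filter (fun g => Nat.gcd (g * ℓ) m = g)

lemma dblParen_pos (ℓ m : ℕ) : 0 < dblParen ℓ m := by
  apply Finset.prod_pos
  intro p hp
  exact pow_pos (Nat.prime_of_mem_primeFactors hp).pos _

lemma dblParen_factorization (ℓ m : ℕ) (p : ℕ) :
    (dblParen ℓ m).factorization p =
      if p ∈ ℓ.primeFactors then m.factorization p else 0 := by
  unfold dblParen
  rw [Nat.factorization_prod
    (fun q hq => pow_ne_zero _ (Nat.prime_of_mem_primeFactors hq).ne_zero)]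
  rw [Finsupp.finset_sum_apply]
  rw [Finset.sum_congr rfl (fun q hq => by
    rw [(Nat.prime_of_mem_primeFactors hq).factorization_pow, Finsupp.single_apply])]
  exact Finset.sum_ite_eq' ℓ.primeFactors p (fun q => m.factorization q)

lemma mem_primeFactors_fact {ℓ p : ℕ} (hℓ : ℓ ≠ 0) :
    p ∈ ℓ.primeFactors ↔ ℓ.factorization p ≠ 0 := by
  rw [← Nat.support_factorization, Finsupp.mem_support_iff]

lemma dblParen_dvd_of_mem {m ℓ a g : ℕ} (hm : m ≠ 0) (hℓ : ℓ ≠ 0)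
    (hg : g ∈ Gset m ℓ a) : dblParen ℓ m ∣ g := by
  simp only [Gset, Finset.mem_filter, Finset.mem_Icc] at hg
  obtain ⟨⟨hg1, _⟩, hgcd⟩ := hg
  have hg0 : g ≠ 0 := Nat.one_le_iff_ne_zero.mp hg1
  rw [← Nat.factorization_le_iff_dvd (dblParen_pos ℓ m).ne' hg0]
  intro p
  rw [dblParen_factorization]
  split_ifs with hp
  · -- ν_p(m) ≤ ν_p(g)
    have hℓp : ℓ.factorization p ≠ 0 := (mem_primeFactors_fact hℓ).mp hp
    have h1 : g.factorization p =
        min ((g * ℓ).factorization p) (m.factorization p) := by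
      conv_lhs => rw [← hgcd]
      rw [Nat.factorization_gcd (mul_ne_zero hg0 hℓ) hm]
      rfl
    rw [Nat.factorization_mul hg0 hℓ, Finsupp.add_apply] at h1
    omega
  · exact Nat.zero_le _

lemma gcd_dblParen (m ℓ : ℕ) (hm : m ≠ 0) (hℓ : ℓ ≠ 0) :
    Nat.gcd (dblParen ℓ m * ℓ) m = dblParen ℓ m := by
  have hd0 : dblParen ℓ m ≠ 0 := (dblParen_pos ℓ m).ne'
  have hdm : dblParen ℓ m ∣ m := by
    rw [← Nat.factorization_le_iff_dvd hd0 hm]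
    intro p
    rw [dblParen_factorization]
    split_ifs <;> simp
  apply Nat.dvd_antisymm
  · rw [← Nat.factorization_le_iff_dvd
      (Nat.gcd_pos_of_pos_right _ (Nat.pos_of_ne_zero hm)).ne' hd0]
    intro p
    rw [Nat.factorization_gcd (mul_ne_zero hd0 hℓ) hm]
    have h1 : ((dblParen ℓ m * ℓ).factorization ⊓ m.factorization) p =
        min ((dblParen ℓ m * ℓ).factorization p) (m.factorization p) := rfl
    rw [h1, Nat.factorization_mul hd0 hℓ, Finsupp.add_apply, dblParen_factorization]
    by_cases hp : p ∈ ℓ.primeFactors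
    · simp only [hp, if_true]; omega
    · have : ℓ.factorization p = 0 := by
        by_contra h; exact hp ((mem_primeFactors_fact hℓ).mpr h)
      simp only [hp, if_false, this]; omega
  · exact Nat.dvd_gcd (dvd_mul_right _ _) hdm

theorem dblParen_dvd_iff_rep (m ℓ a : ℕ) (hm : 0 < m) (hℓ : 0 < ℓ) (ha : 0 < a) :
    dblParen ℓ m ∣ a ↔ ∃ x : ℕ → ℕ, ∑ g ∈ Gset m ℓ a, g * x g = a := by
  set d := dblParen ℓ m with hd
  constructor
  · intro hda
    have hdmem : d ∈ Gset m ℓ a := by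
      simp only [Gset, Finset.mem_filter, Finset.mem_Icc]
      exact ⟨⟨dblParen_pos ℓ m, Nat.le_of_dvd ha hda⟩, gcd_dblParen m ℓ hm.ne' hℓ.ne'⟩
    refine ⟨fun g => if g = d then a / d else 0, ?_⟩
    rw [Finset.sum_eq_single d]
    · simp only [if_pos rfl]
      exact Nat.mul_div_cancel' hda
    · intro b _ hb
      simp [hb]
    · intro h; exact absurd hdmem h
  · rintro ⟨x, hx⟩
    rw [← hx]
    exact Finset.dvd_sum fun g hg =>
      (dblParen_dvd_of_mem hm.ne' hℓ.ne' hg).mul_right _
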